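/- In the Euclidean plane, let r > 0, let c be a point, and let a ≠ b be points with segment [a,b] (the closed segment joining a and b). Then the segment [a,b] intersects the circle {x : dist(x,c) = r} in exactly two points if and only if the distance from c to the segment [a,b] (the infimum of dist(c,x) over x ∈ [a,b]) is strictly less than r, and dist(c,a) ≥ r, and dist(c,b) ≥ r. -/

import Mathlib

open Set

private lemma quad_root_fact (A B C t₁ t₂ : ℝ) (hA : A ≠ 0)
    (h1 : A*t₁^2+B*t₁+C = 0) (h2 : A*t₂^2+B*t₂+C = 0) (hne : t₁ ≠ t₂) (t : ℝ) :
    A*t^2+B*t+C = A*(t-t₁)*(t-t₂) := by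
  have hd : t₁ - t₂ ≠ 0 := sub_ne_zero.2 hne
  have h3 : (t₁ - t₂) * (A*(t₁+t₂) + B) = 0 := by linear_combination h1 - h2
  have hB : B = -(A*(t₁+t₂)) := by
    rcases mul_eq_zero.1 h3 with h | h
    · exact absurd h hd
    · linarith
  have hC : C = A*(t₁*t₂) := by linear_combination h1 - t₁ * hB
  rw [hB, hC]; ring

private lemma quad_encard (A B C : ℝ) (hA : 0 < A) :
    {t : ℝ | t ∈ Icc (0:ℝ) 1 ∧ A*t^2+B*t+C = 0}.encard = 2 ↔
    ((∃ t ∈ Icc (0:ℝ) 1, A*t^2+B*t+C < 0) ∧ 0 ≤ C ∧ 0 ≤ A+B+C) := by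
  constructor
  · intro h
    obtain ⟨t₁, t₂, hne, hT⟩ := Set.encard_eq_two.1 h
    have m1 : (0 ≤ t₁ ∧ t₁ ≤ 1) ∧ A*t₁^2+B*t₁+C = 0 := by
      have : t₁ ∈ {t : ℝ | t ∈ Icc (0:ℝ) 1 ∧ A*t^2+B*t+C = 0} := by
        rw [hT]; exact mem_insert _ _
      simpa [Set.mem_Icc] using this
    have m2 : (0 ≤ t₂ ∧ t₂ ≤ 1) ∧ A*t₂^2+B*t₂+C = 0 := by
      have : t₂ ∈ {t : ℝ | t ∈ Icc (0:ℝ) 1 ∧ A*t^2+B*t+C = 0} := by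
        rw [hT]; exact mem_insert_of_mem _ rfl
      simpa [Set.mem_Icc] using this
    have fact := quad_root_fact A B C t₁ t₂ hA.ne' m1.2 m2.2 hne
    have hsq : 0 < (t₁ - t₂)^2 := by
      have := sub_ne_zero.2 hne; positivity
    refine ⟨⟨(t₁+t₂)/2, ?_, ?_⟩, ?_, ?_⟩
    · rw [mem_Icc]; constructor <;> [linarith [m1.1.1, m2.1.1]; linarith [m1.1.2, m2.1.2]]
    · have := fact ((t₁+t₂)/2)
      nlinarith [mul_pos hA hsq]
    · have := fact 0
      nlinarith [mul_nonneg (mul_nonneg hA.le m1.1.1) m2.1.1]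
    · have := fact 1
      nlinarith [mul_nonneg (mul_nonneg hA.le (by linarith [m1.1.2] : (0:ℝ) ≤ 1 - t₁))
        (by linarith [m2.1.2] : (0:ℝ) ≤ 1 - t₂)]
  · rintro ⟨⟨t0, ht0, hq0⟩, hC, h1⟩
    have hcont : Continuous fun t : ℝ => A*t^2+B*t+C := by continuity
    have i1 : (0:ℝ) ∈ Icc (A*t0^2+B*t0+C) (A*0^2+B*0+C) := by
      constructor
      · exact hq0.le
      · norm_num; linarith
    obtain ⟨t₁, ht₁, hroot1⟩ := intermediate_value_Icc' ht0.1 hcont.continuousOn i1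
    replace hroot1 : A*t₁^2+B*t₁+C = 0 := hroot1
    have i2 : (0:ℝ) ∈ Icc (A*t0^2+B*t0+C) (A*1^2+B*1+C) := by
      constructor
      · exact hq0.le
      · norm_num; linarith
    obtain ⟨t₂, ht₂, hroot2⟩ := intermediate_value_Icc ht0.2 hcont.continuousOn i2
    replace hroot2 : A*t₂^2+B*t₂+C = 0 := hroot2
    have hne : t₁ ≠ t₂ := by
      rintro rfl
      have h0 : t₁ = t0 := le_antisymm ht₁.2 ht₂.1
      rw [h0] at hroot1
      linarith
    have fact := quad_root_fact A B C t₁ t₂ hA.ne' hroot1 hroot2 hne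
    have hTeq : {t : ℝ | t ∈ Icc (0:ℝ) 1 ∧ A*t^2+B*t+C = 0} = {t₁, t₂} := by
      ext t
      simp only [mem_setOf_eq, mem_insert_iff, mem_singleton_iff, mem_Icc]
      constructor
      · rintro ⟨-, ht⟩
        have h5 := fact t
        rw [ht] at h5
        rcases mul_eq_zero.1 h5.symm with h6 | h6
        · rcases mul_eq_zero.1 h6 with h7 | h7
          · exact absurd h7 hA.ne'
          · exact Or.inl (by linarith [sub_eq_zero.1 h7])
        · exact Or.inr (by linarith [sub_eq_zero.1 h6])
      · rintro (rfl | rfl)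
        · exact ⟨⟨ht₁.1, le_trans ht₁.2 ht0.2⟩, hroot1⟩
        · exact ⟨⟨le_trans ht0.1 ht₂.1, ht₂.2⟩, hroot2⟩
    rw [hTeq, Set.encard_pair hne]

/-- In the Euclidean plane, with `r > 0`, a point `c`, and a
nondegenerate closed segment `[a, b]`, the segment meets the circle of radius `r`
around `c` in exactly two points if and only if the distance from `c` to the segment
is `< r` while both endpoints are at distance `≥ r` from `c`. -/
theorem stmt7 (r : ℝ) (hr : 0 < r) (c a b : EuclideanSpace ℝ (Fin 2)) (hab : a ≠ b) :
    (segment ℝ a b ∩ Metric.sphere c r).encard = 2 ↔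
      (Metric.infDist c (segment ℝ a b) < r ∧ r ≤ dist c a ∧ r ≤ dist c b) := by
  have hv : b - a ≠ 0 := sub_ne_zero.2 (Ne.symm hab)
  set A := ‖b - a‖^2 with hA
  set B := 2 * (inner ℝ (a - c) (b - a) : ℝ) with hB
  set C := ‖a - c‖^2 - r^2 with hC
  have hApos : 0 < A := by rw [hA]; exact pow_pos (norm_pos_iff.mpr hv) 2
  set f : ℝ → EuclideanSpace ℝ (Fin 2) := fun t => a + t • (b - a) with hf
  have hdist : ∀ t : ℝ, dist (f t) c ^ 2 = A*t^2 + B*t + C + r^2 := by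
    intro t
    have e1 : f t - c = (a - c) + t • (b - a) := by
      simp only [hf]; abel
    rw [dist_eq_norm, e1, norm_add_sq_real, real_inner_smul_right, norm_smul,
      Real.norm_eq_abs, mul_pow, sq_abs, hA, hB, hC]
    ring
  have hmem : ∀ t : ℝ, (dist (f t) c = r ↔ A*t^2+B*t+C = 0) := by
    intro t
    constructor
    · intro h
      have := hdist t
      rw [h] at this
      linarith
    · intro h
      have h2 : dist (f t) c ^ 2 = r ^ 2 := by
        have := hdist t; linarith
      rw [← Real.sqrt_sq dist_nonneg, h2, Real.sqrt_sq hr.le]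
  have hlt : ∀ t : ℝ, (dist (f t) c < r ↔ A*t^2+B*t+C < 0) := by
    intro t
    have hd := hdist t
    have hdn : (0:ℝ) ≤ dist (f t) c := dist_nonneg
    constructor
    · intro h; nlinarith
    · intro h; nlinarith
  have hseg : segment ℝ a b = f '' Icc (0:ℝ) 1 := segment_eq_image' ℝ a b
  have hinj : Function.Injective f := by
    intro s t h
    have h2 : (s - t) • (b - a) = 0 := by
      have h3 : s • (b - a) = t • (b - a) := by
        simpa [hf] using h
      rw [sub_smul, h3, sub_self]
    rcases smul_eq_zero.1 h2 with h3 | h3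
    · exact sub_eq_zero.1 h3
    · exact absurd h3 hv
  have hf0 : f 0 = a := by simp [hf]
  have hf1 : f 1 = b := by simp [hf]
  have hset : segment ℝ a b ∩ Metric.sphere c r
      = f '' {t : ℝ | t ∈ Icc (0:ℝ) 1 ∧ A*t^2+B*t+C = 0} := by
    rw [hseg]
    ext x
    simp only [mem_inter_iff, mem_image, Metric.mem_sphere, mem_setOf_eq]
    constructor
    · rintro ⟨⟨t, ht, rfl⟩, hx⟩
      exact ⟨t, ⟨ht, (hmem t).1 hx⟩, rfl⟩
    · rintro ⟨t, ⟨ht, hroot⟩, rfl⟩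
      exact ⟨⟨t, ht, rfl⟩, (hmem t).2 hroot⟩
  rw [hset, Set.InjOn.encard_image (hinj.injOn), quad_encard A B C hApos]
  have hne : (segment ℝ a b).Nonempty := ⟨a, left_mem_segment ℝ a b⟩
  constructor
  · rintro ⟨⟨t, ht, hqt⟩, hc0, hc1⟩
    refine ⟨?_, ?_, ?_⟩
    · rw [Metric.infDist_lt_iff hne]
      exact ⟨f t, hseg ▸ Set.mem_image_of_mem f ht, by rw [dist_comm]; exact (hlt t).2 hqt⟩
    · rw [dist_comm, ← hf0]
      by_contra h
      push_neg at h
      have := (hlt 0).1 h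
      norm_num at this
      linarith
    · rw [dist_comm, ← hf1]
      by_contra h
      push_neg at h
      have := (hlt 1).1 h
      norm_num at this
      linarith
  · rintro ⟨hinf, ha, hb⟩
    rw [Metric.infDist_lt_iff hne] at hinf
    obtain ⟨x, hx, hdx⟩ := hinf
    rw [hseg] at hx
    obtain ⟨t, ht, rfl⟩ := hx
    refine ⟨⟨t, ht, (hlt t).1 (by rwa [dist_comm] at hdx)⟩, ?_, ?_⟩
    · have h0 : ¬ dist (f 0) c < r := by
        rw [hf0, dist_comm]; exact not_lt.2 ha
      have := (hlt 0).not.1 h0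
      push_neg at this
      norm_num at this
      linarith
    · have h1 : ¬ dist (f 1) c < r := by
        rw [hf1, dist_comm]; exact not_lt.2 hb
      have := (hlt 1).not.1 h1
      push_neg at this
      norm_num at this
      linarith
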